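/- arXiv:1911.07693 — 2 statements merged into one kernel-verified Lean document; each statement's English description precedes it below -/
import Mathlib

section
/- Main convergence theorem (MGD): Let f_i : ℝ^d → ℝ (i = 1,...,T) be C² with ξ_i I ≤ ∇²f_i ≤ L_i I, 0 < ξ_i ≤ L_i, let L̄ = max_i L_i, and fix points w_i*. Suppose (m̄_{ij}^t) is row-stochastic with nonnegative entries for each t, σ > 0, and 0 < α < 2/(2σ + L̄). Then the iterates w_i^{t+1} = (1-ασ)w_i^t + ασ Σ_j m̄_{ij}^t w_j^t - α∇f_i(w_i^t) satisfy limsup_{t→∞} max_i ‖w_i^t - w_i*‖ ≤ (2ασ max_i ‖w_i*‖ + α max_i ‖∇f_i(w_i*)‖)/(1 - (γ̄ + ασ)), where γ̄ = max_i max{|1-ασ-αξ_i|, |1-ασ-αL_i|}. -/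
open scoped RealInnerProductSpace

lemma symOpBound {E : Type*} [NormedAddCommGroup E] [InnerProductSpace ℝ E]
    (A : E →L[ℝ] E) (hsym : ∀ v w : E, ⟪A v, w⟫ = ⟪A w, v⟫) {a b : ℝ}
    (hab : ∀ v : E, a * ‖v‖ ^ 2 ≤ ⟪A v, v⟫ ∧ ⟪A v, v⟫ ≤ b * ‖v‖ ^ 2)
    (v : E) : ‖A v‖ ≤ max |a| |b| * ‖v‖ := by
  rcases eq_or_ne v 0 with rfl | hv
  · simp
  have hvn : (0:ℝ) < ‖v‖ := norm_pos_iff.2 hv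
  have hv2 : (0:ℝ) < ‖v‖ ^ 2 := by positivity
  have hle : a ≤ b := by
    have h := hab v
    nlinarith [h.1, h.2]
  set c : ℝ := (a + b) / 2 with hc
  set s : ℝ := (b - a) / 2 with hs
  have hs0 : 0 ≤ s := by rw [hs]; linarith
  have hq : ∀ u : E, |⟪A u, u⟫ - c * ‖u‖ ^ 2| ≤ s * ‖u‖ ^ 2 := by
    intro u
    have h := hab u
    rw [abs_le]
    constructor <;> [nlinarith [h.1]; nlinarith [h.2]]
  have key : ∀ u y : E, ⟪A u, y⟫ - c * ⟪u, y⟫ ≤ s / 2 * (‖u‖ ^ 2 + ‖y‖ ^ 2) := by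
    intro u y
    have e1 : ⟪A (u + y), u + y⟫ = ⟪A u, u⟫ + 2 * ⟪A u, y⟫ + ⟪A y, y⟫ := by
      simp only [map_add, inner_add_left, inner_add_right]
      rw [hsym y u]; try ring
    have e2 : ⟪A (u - y), u - y⟫ = ⟪A u, u⟫ - 2 * ⟪A u, y⟫ + ⟪A y, y⟫ := by
      simp only [map_sub, inner_sub_left, inner_sub_right]
      rw [hsym y u]; try ring
    have n1 : ‖u + y‖ ^ 2 = ‖u‖ ^ 2 + 2 * ⟪u, y⟫ + ‖y‖ ^ 2 := by
      rw [@norm_add_sq_real]; try ring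
    have n2 : ‖u - y‖ ^ 2 = ‖u‖ ^ 2 - 2 * ⟪u, y⟫ + ‖y‖ ^ 2 := by
      rw [@norm_sub_sq_real]; try ring
    obtain ⟨h1a, h1b⟩ := abs_le.1 (hq (u + y))
    obtain ⟨h2a, h2b⟩ := abs_le.1 (hq (u - y))
    rw [e1, n1] at h1a h1b
    rw [e2, n2] at h2a h2b
    nlinarith [h1b, h2a]
  have hB : ‖A v - c • v‖ ≤ s * ‖v‖ := by
    rcases eq_or_ne (A v - c • v) 0 with h0 | h0
    · rw [h0, norm_zero]; positivity
    · set B : E := A v - c • v with hBdef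
      have hBn : (0:ℝ) < ‖B‖ := norm_pos_iff.2 h0
      set y : E := (‖v‖ / ‖B‖) • B with hy
      have hyn : ‖y‖ = ‖v‖ := by
        rw [hy, norm_smul, Real.norm_eq_abs, abs_of_nonneg (by positivity),
          div_mul_cancel₀ _ (ne_of_gt hBn)]
      have hBy : ⟪A v, y⟫ - c * ⟪v, y⟫ = ‖v‖ * ‖B‖ := by
        have h1 : ⟪A v, y⟫ - c * ⟪v, y⟫ = ⟪B, y⟫ := by
          rw [hBdef, inner_sub_left, real_inner_smul_left]; try ring
        rw [h1, hy, real_inner_smul_right, real_inner_self_eq_norm_sq]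
        field_simp
        try ring
      have hk := key v y
      rw [hBy, hyn] at hk
      nlinarith [hk, hvn]
  have hsc : s + |c| ≤ max |a| |b| := by
    rcases le_or_gt 0 (a + b) with h | h
    · have h2 : s + |c| = b := by rw [hs, hc, abs_of_nonneg (by linarith)]; ring
      rw [h2]; exact le_max_of_le_right (le_abs_self b)
    · have h2 : s + |c| = -a := by rw [hs, hc, abs_of_neg (by linarith)]; ring
      rw [h2]; exact le_max_of_le_left (neg_le_abs a)
  calc ‖A v‖ = ‖(A v - c • v) + c • v‖ := by rw [sub_add_cancel]
    _ ≤ ‖A v - c • v‖ + ‖c • v‖ := norm_add_le _ _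
    _ ≤ s * ‖v‖ + |c| * ‖v‖ := by rw [norm_smul, Real.norm_eq_abs]; linarith
    _ ≤ max |a| |b| * ‖v‖ := by nlinarith [hsc, hvn.le]


noncomputable def dualIsoR (E : Type*) [NormedAddCommGroup E] [InnerProductSpace ℝ E]
    [CompleteSpace E] : StrongDual ℝ E →L[ℝ] E :=
  LinearMap.mkContinuous
    { toFun := fun φ => (InnerProductSpace.toDual ℝ E).symm φ
      map_add' := by intros; simp
      map_smul' := by intros; simp }
    1 (fun φ => by simp)

lemma dualIsoR_inner {E : Type*} [NormedAddCommGroup E] [InnerProductSpace ℝ E]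
    [CompleteSpace E] (φ : StrongDual ℝ E) (z : E) :
    ⟪dualIsoR E φ, z⟫ = φ z :=
  InnerProductSpace.toDual_symm_apply

lemma grad_hasFDerivAt {E : Type*} [NormedAddCommGroup E] [InnerProductSpace ℝ E]
    [CompleteSpace E] (f : E → ℝ) (hC2 : ContDiff ℝ 2 f) (u : E) :
    HasFDerivAt (gradient f) ((dualIsoR E).comp (fderiv ℝ (fderiv ℝ f) u)) u := by
  have hdiff : Differentiable ℝ (fderiv ℝ f) :=
    (hC2.fderiv_right (m := 1) (by norm_num)).differentiable one_ne_zero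
  have h : HasFDerivAt (fun x => dualIsoR E (fderiv ℝ f x))
      ((dualIsoR E).comp (fderiv ℝ (fderiv ℝ f) u)) u :=
    ((dualIsoR E).hasFDerivAt).comp u (hdiff u).hasFDerivAt
  exact h

lemma grad_fderiv_symm {E : Type*} [NormedAddCommGroup E] [InnerProductSpace ℝ E]
    [CompleteSpace E] (f : E → ℝ) (hC2 : ContDiff ℝ 2 f) (u v z : E) :
    ⟪(fderiv ℝ (gradient f) u) v, z⟫ = ⟪(fderiv ℝ (gradient f) u) z, v⟫ := by
  have hdiff : Differentiable ℝ (fderiv ℝ f) :=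
    (hC2.fderiv_right (m := 1) (by norm_num)).differentiable one_ne_zero
  have hD : fderiv ℝ (gradient f) u = (dualIsoR E).comp (fderiv ℝ (fderiv ℝ f) u) :=
    (grad_hasFDerivAt f hC2 u).fderiv
  have hsym := second_derivative_symmetric
    (f' := fderiv ℝ f) (f'' := fderiv ℝ (fderiv ℝ f) u)
    (fun y => (hC2.differentiable (by norm_num) y).hasFDerivAt)
    (hdiff u).hasFDerivAt
  rw [hD]
  simp only [ContinuousLinearMap.coe_comp', Function.comp_apply, dualIsoR_inner]
  exact hsym v z

lemma gradStepLip {E : Type*} [NormedAddCommGroup E] [InnerProductSpace ℝ E]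
    [CompleteSpace E] (f : E → ℝ) (hC2 : ContDiff ℝ 2 f) {ξ L : ℝ}
    (hbound : ∀ u v : E,
      ξ * ‖v‖ ^ 2 ≤ ⟪(fderiv ℝ (gradient f) u) v, v⟫ ∧
      ⟪(fderiv ℝ (gradient f) u) v, v⟫ ≤ L * ‖v‖ ^ 2)
    (κ α : ℝ) (hα : 0 < α) (x y : E) :
    ‖(κ • x - α • gradient f x) - (κ • y - α • gradient f y)‖ ≤
      max |κ - α * ξ| |κ - α * L| * ‖x - y‖ := by
  set G : E → E := fun x => κ • x - α • gradient f x with hG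
  have hDG : ∀ u : E, HasFDerivAt G
      (κ • ContinuousLinearMap.id ℝ E - α • fderiv ℝ (gradient f) u) u := by
    intro u
    have hg : HasFDerivAt (gradient f) (fderiv ℝ (gradient f) u) u := by
      rw [(grad_hasFDerivAt f hC2 u).fderiv]; exact grad_hasFDerivAt f hC2 u
    exact ((hasFDerivAt_id u).const_smul κ).sub (hg.const_smul α)
  have hbnd : ∀ u : E, ‖fderiv ℝ G u‖ ≤ max |κ - α * ξ| |κ - α * L| := by
    intro u
    rw [(hDG u).fderiv]
    set A : E →L[ℝ] E := κ • ContinuousLinearMap.id ℝ E - α • fderiv ℝ (gradient f) u with hA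
    have hsym : ∀ v z : E, ⟪A v, z⟫ = ⟪A z, v⟫ := by
      intro v z
      simp only [hA, ContinuousLinearMap.sub_apply, ContinuousLinearMap.smul_apply,
        ContinuousLinearMap.id_apply, inner_sub_left, real_inner_smul_left]
      rw [grad_fderiv_symm f hC2 u v z, real_inner_comm v z]
    have hq : ∀ v : E, (κ - α * L) * ‖v‖ ^ 2 ≤ ⟪A v, v⟫ ∧ ⟪A v, v⟫ ≤ (κ - α * ξ) * ‖v‖ ^ 2 := by
      intro v
      have h := hbound u v
      have hAv : ⟪A v, v⟫ = κ * ‖v‖ ^ 2 - α * ⟪(fderiv ℝ (gradient f) u) v, v⟫ := by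
        simp only [hA, ContinuousLinearMap.sub_apply, ContinuousLinearMap.smul_apply,
          ContinuousLinearMap.id_apply, inner_sub_left, real_inner_smul_left,
          real_inner_self_eq_norm_sq]
      constructor <;> rw [hAv] <;> nlinarith [h.1, h.2]
    apply ContinuousLinearMap.opNorm_le_bound _ (le_trans (abs_nonneg _) (le_max_left _ _))
    intro v
    have := symOpBound A hsym hq v
    calc ‖A v‖ ≤ max |κ - α * L| |κ - α * ξ| * ‖v‖ := this
      _ = max |κ - α * ξ| |κ - α * L| * ‖v‖ := by rw [max_comm]
  have hdiffG : ∀ u ∈ (Set.univ : Set E), DifferentiableAt ℝ G u :=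
    fun u _ => (hDG u).differentiableAt
  have := (convex_univ (𝕜 := ℝ) (E := E)).norm_image_sub_le_of_norm_fderiv_le hdiffG
    (fun u _ => hbnd u) (Set.mem_univ y) (Set.mem_univ x)
  simpa using this

/-- main MGD convergence theorem: with `f_i` C² satisfying
`ξ_i I ≤ ∇²f_i ≤ L_i I`, time-varying row-stochastic transfer matrices `m t`,
`σ > 0` and step size `0 < α < 2/(2σ + L̄)` with `L̄ = max_i L_i`, the MGD iterates
`w_i^{t+1} = (1-ασ)w_i^t + ασ Σ_j m̄_{ij}^t w_j^t - α∇f_i(w_i^t)` satisfy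
`limsup_t max_i ‖w_i^t - w_i*‖
  ≤ (2ασ max_i ‖w_i*‖ + α max_i ‖∇f_i(w_i*)‖)/(1 - (γ̄ + ασ))`
where `γ̄ = max_i max{|1-ασ-αξ_i|, |1-ασ-αL_i|}`. -/
theorem stmt15 {d T : ℕ} (hT : 0 < T)
    (f : Fin T → EuclideanSpace ℝ (Fin d) → ℝ)
    (hC2 : ∀ i, ContDiff ℝ 2 (f i))
    (ξ L : Fin T → ℝ) (hξ : ∀ i, 0 < ξ i) (hξL : ∀ i, ξ i ≤ L i)
    (hbound : ∀ (i : Fin T) (u v : EuclideanSpace ℝ (Fin d)),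
      ξ i * ‖v‖ ^ 2 ≤ ⟪(fderiv ℝ (gradient (f i)) u) v, v⟫ ∧
      ⟪(fderiv ℝ (gradient (f i)) u) v, v⟫ ≤ L i * ‖v‖ ^ 2)
    (wstar : Fin T → EuclideanSpace ℝ (Fin d))
    (m : ℕ → Fin T → Fin T → ℝ)
    (hm : ∀ t i j, 0 ≤ m t i j) (hrow : ∀ t i, ∑ j, m t i j = 1)
    (σ α : ℝ) (hσ : 0 < σ) (hα0 : 0 < α)
    (hne : Finset.univ.Nonempty (α := Fin T))
    (hα : α < 2 / (2 * σ + Finset.univ.sup' hne L))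
    (w : ℕ → Fin T → EuclideanSpace ℝ (Fin d))
    (hiter : ∀ t i, w (t + 1) i =
      (1 - α * σ) • w t i + (α * σ) • (∑ j, m t i j • w t j) -
        α • gradient (f i) (w t i)) :
    Filter.limsup (fun t => Finset.univ.sup' hne fun i => ‖w t i - wstar i‖)
        Filter.atTop ≤
      (2 * α * σ * (Finset.univ.sup' hne fun i => ‖wstar i‖) +
          α * (Finset.univ.sup' hne fun i => ‖gradient (f i) (wstar i)‖)) /
        (1 - ((Finset.univ.sup' hne fun i =>
            max |1 - α * σ - α * ξ i| |1 - α * σ - α * L i|) + α * σ)) := by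
  classical
  obtain ⟨i₀, -⟩ := id hne
  set γb : ℝ := Finset.univ.sup' hne fun i =>
    max |1 - α * σ - α * ξ i| |1 - α * σ - α * L i| with hγbdef
  set Lb : ℝ := Finset.univ.sup' hne L with hLbdef
  set Ws : ℝ := Finset.univ.sup' hne fun i => ‖wstar i‖ with hWsdef
  set Gs : ℝ := Finset.univ.sup' hne fun i => ‖gradient (f i) (wstar i)‖ with hGsdef
  set e : ℕ → ℝ := fun t => Finset.univ.sup' hne fun i => ‖w t i - wstar i‖ with hedef
  set ρ : ℝ := γb + α * σ with hρdef
  set cst : ℝ := 2 * α * σ * Ws + α * Gs with hcstdef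
  have hWs0 : 0 ≤ Ws := by
    rw [hWsdef]
    exact le_trans (norm_nonneg (wstar i₀))
      (Finset.le_sup' (fun i => ‖wstar i‖) (Finset.mem_univ i₀))
  have hGs0 : 0 ≤ Gs := by
    rw [hGsdef]
    exact le_trans (norm_nonneg _)
      (Finset.le_sup' (fun i => ‖gradient (f i) (wstar i)‖) (Finset.mem_univ i₀))
  have he0 : ∀ t, 0 ≤ e t := by
    intro t
    rw [hedef]
    exact le_trans (norm_nonneg _)
      (Finset.le_sup' (fun i => ‖w t i - wstar i‖) (Finset.mem_univ i₀))
  have hc0 : 0 ≤ cst := by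
    have h1 : 0 ≤ 2 * α * σ * Ws := by positivity
    have h2 : 0 ≤ α * Gs := by positivity
    rw [hcstdef]; linarith
  have hγ0 : 0 ≤ γb := by
    rw [hγbdef]
    exact le_trans (abs_nonneg (1 - α * σ - α * ξ i₀)) (le_trans (le_max_left _ _)
      (Finset.le_sup' (fun i => max |1 - α * σ - α * ξ i| |1 - α * σ - α * L i|)
        (Finset.mem_univ i₀)))
  have hLb0 : 0 < 2 * σ + Lb := by
    have h1 : ξ i₀ ≤ Lb := by
      rw [hLbdef]; exact le_trans (hξL i₀) (Finset.le_sup' L (Finset.mem_univ i₀))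
    have := hξ i₀
    linarith
  have hα2 : α * (2 * σ + Lb) < 2 := by
    have := (lt_div_iff₀ hLb0).1 hα
    linarith
  have hρ1 : ρ < 1 := by
    have hγlt : γb < 1 - α * σ := by
      rw [hγbdef]
      rw [Finset.sup'_lt_iff]
      intro i _
      have hLi : L i ≤ Lb := Finset.le_sup' L (Finset.mem_univ i)
      have hξi : ξ i ≤ Lb := le_trans (hξL i) hLi
      have h1 : α * ξ i ≤ α * Lb := mul_le_mul_of_nonneg_left hξi hα0.le
      have h2 : α * L i ≤ α * Lb := mul_le_mul_of_nonneg_left hLi hα0.le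
      have h3 : 0 < α * ξ i := mul_pos hα0 (hξ i)
      have h4 : 0 < α * L i := mul_pos hα0 (lt_of_lt_of_le (hξ i) (hξL i))
      rw [max_lt_iff]
      constructor <;> rw [abs_lt] <;> constructor <;> nlinarith
    rw [hρdef]; linarith
  have hρ0 : 0 ≤ ρ := by
    have : 0 < α * σ := mul_pos hα0 hσ
    rw [hρdef]; linarith
  have hrec : ∀ t, e (t + 1) ≤ ρ * e t + cst := by
    intro t
    apply Finset.sup'_le
    intro i _
    have hdec : w (t + 1) i - wstar i =
        (((1 - α * σ) • w t i - α • gradient (f i) (w t i)) -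
          ((1 - α * σ) • wstar i - α • gradient (f i) (wstar i))) +
        (α * σ) • (∑ j, m t i j • (w t j - wstar j)) +
        ((α * σ) • (∑ j, m t i j • wstar j) - (α * σ) • wstar i) -
        α • gradient (f i) (wstar i) := by
      have hsum : (∑ j, m t i j • (w t j - wstar j)) =
          (∑ j, m t i j • w t j) - (∑ j, m t i j • wstar j) := by
        rw [← Finset.sum_sub_distrib]
        exact Finset.sum_congr rfl fun j _ => smul_sub _ _ _
      rw [hiter t i, hsum]
      module
    have h1 : ‖((1 - α * σ) • w t i - α • gradient (f i) (w t i)) -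
        ((1 - α * σ) • wstar i - α • gradient (f i) (wstar i))‖ ≤ γb * e t := by
      refine le_trans (gradStepLip (f i) (hC2 i) (hbound i) (1 - α * σ) α hα0
        (w t i) (wstar i)) ?_
      have hg : max |1 - α * σ - α * ξ i| |1 - α * σ - α * L i| ≤ γb := by
        rw [hγbdef]
        exact Finset.le_sup' (fun k => max |1 - α * σ - α * ξ k| |1 - α * σ - α * L k|)
          (Finset.mem_univ i)
      have hn : ‖w t i - wstar i‖ ≤ e t :=
        Finset.le_sup' (fun i => ‖w t i - wstar i‖) (Finset.mem_univ i)
      exact mul_le_mul hg hn (norm_nonneg _) hγ0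
    have h2 : ‖∑ j, m t i j • (w t j - wstar j)‖ ≤ e t := by
      calc ‖∑ j, m t i j • (w t j - wstar j)‖
          ≤ ∑ j, ‖m t i j • (w t j - wstar j)‖ := norm_sum_le _ _
        _ = ∑ j, m t i j * ‖w t j - wstar j‖ := Finset.sum_congr rfl fun j _ => by
            rw [norm_smul, Real.norm_eq_abs, abs_of_nonneg (hm t i j)]
        _ ≤ ∑ j, m t i j * e t := Finset.sum_le_sum fun j _ =>
            mul_le_mul_of_nonneg_left
              (Finset.le_sup' (fun k => ‖w t k - wstar k‖) (Finset.mem_univ j)) (hm t i j)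
        _ = e t := by rw [← Finset.sum_mul, hrow t i, one_mul]
    have h3 : ‖∑ j, m t i j • wstar j‖ ≤ Ws := by
      calc ‖∑ j, m t i j • wstar j‖
          ≤ ∑ j, ‖m t i j • wstar j‖ := norm_sum_le _ _
        _ = ∑ j, m t i j * ‖wstar j‖ := Finset.sum_congr rfl fun j _ => by
            rw [norm_smul, Real.norm_eq_abs, abs_of_nonneg (hm t i j)]
        _ ≤ ∑ j, m t i j * Ws := Finset.sum_le_sum fun j _ =>
            mul_le_mul_of_nonneg_left
              (Finset.le_sup' (fun k => ‖wstar k‖) (Finset.mem_univ j)) (hm t i j)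
        _ = Ws := by rw [← Finset.sum_mul, hrow t i, one_mul]
    have h4 : ‖wstar i‖ ≤ Ws := Finset.le_sup' (fun k => ‖wstar k‖) (Finset.mem_univ i)
    have h5 : ‖gradient (f i) (wstar i)‖ ≤ Gs :=
      Finset.le_sup' (fun k => ‖gradient (f k) (wstar k)‖) (Finset.mem_univ i)
    have hασ : (0:ℝ) < α * σ := mul_pos hα0 hσ
    rw [hdec]
    refine le_trans (norm_sub_le _ _) ?_
    refine le_trans (add_le_add_left (norm_add₃_le) _) ?_
    have b2 : ‖(α * σ) • ∑ j, m t i j • (w t j - wstar j)‖ ≤ (α * σ) * e t := by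
      rw [norm_smul, Real.norm_eq_abs, abs_of_pos hασ]
      exact mul_le_mul_of_nonneg_left h2 hασ.le
    have b3 : ‖(α * σ) • (∑ j, m t i j • wstar j) - (α * σ) • wstar i‖ ≤
        (α * σ) * Ws + (α * σ) * Ws := by
      refine le_trans (norm_sub_le _ _) ?_
      rw [norm_smul, norm_smul, Real.norm_eq_abs, abs_of_pos hασ]
      exact add_le_add (mul_le_mul_of_nonneg_left h3 hασ.le)
        (mul_le_mul_of_nonneg_left h4 hασ.le)
    have b4 : ‖α • gradient (f i) (wstar i)‖ ≤ α * Gs := by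
      rw [norm_smul, Real.norm_eq_abs, abs_of_pos hα0]
      exact mul_le_mul_of_nonneg_left h5 hα0.le
    have heq : γb * e t + (α * σ) * e t + ((α * σ) * Ws + (α * σ) * Ws) + α * Gs =
        ρ * e t + cst := by rw [hρdef, hcstdef]; ring
    linarith [h1, b2, b3, b4]
  have h1ρ : (0:ℝ) < 1 - ρ := by linarith
  have hK : ∀ t, e t ≤ ρ ^ t * e 0 + cst / (1 - ρ) := by
    intro t
    induction t with
    | zero =>
      have : 0 ≤ cst / (1 - ρ) := div_nonneg hc0 h1ρ.le
      simp only [pow_zero, one_mul]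
      linarith
    | succ n ih =>
      have step := hrec n
      have h2 : ρ * e n ≤ ρ * (ρ ^ n * e 0 + cst / (1 - ρ)) :=
        mul_le_mul_of_nonneg_left ih hρ0
      have h3 : ρ * (ρ ^ n * e 0 + cst / (1 - ρ)) + cst =
          ρ ^ (n + 1) * e 0 + cst / (1 - ρ) := by
        field_simp
        ring
      calc e (n + 1) ≤ ρ * e n + cst := step
        _ ≤ ρ * (ρ ^ n * e 0 + cst / (1 - ρ)) + cst := by linarith
        _ = ρ ^ (n + 1) * e 0 + cst / (1 - ρ) := h3
  have htend : Filter.Tendsto (fun t => ρ ^ t * e 0 + cst / (1 - ρ))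
      Filter.atTop (nhds (cst / (1 - ρ))) := by
    have h0 : Filter.Tendsto (fun t : ℕ => ρ ^ t * e 0 + cst / (1 - ρ))
        Filter.atTop (nhds (0 * e 0 + cst / (1 - ρ))) :=
      (((tendsto_pow_atTop_nhds_zero_of_lt_one hρ0 hρ1).mul_const (e 0)).add_const _)
    simpa using h0
  calc Filter.limsup e Filter.atTop
      ≤ Filter.limsup (fun t => ρ ^ t * e 0 + cst / (1 - ρ)) Filter.atTop := by
        refine Filter.limsup_le_limsup (Filter.Eventually.of_forall hK) ?_ ?_
        · exact Filter.isCoboundedUnder_le_of_le Filter.atTop he0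
        · exact htend.isBoundedUnder_le
    _ = cst / (1 - ρ) := htend.limsup_eq
end

section
/- One-step contraction inequality for MGD: with assumptions as in the main convergence theorem, for each iteration t, max_i ‖w_i^{t+1} - w_i*‖ ≤ (γ̄ + ασ)·max_i ‖w_i^t - w_i*‖ + 2ασ max_i ‖w_i*‖ + α max_i ‖∇f_i(w_i*)‖. -/
open scoped RealInnerProductSpace
open InnerProductSpace

variable {E : Type*} [NormedAddCommGroup E] [InnerProductSpace ℝ E]

/-- Polarization bound for symmetric operators. -/
lemma sym_abs_bound (A : E →L[ℝ] E) (hsym : ∀ v w : E, ⟪A v, w⟫ = ⟪A w, v⟫)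
    {r : ℝ} (hr : 0 ≤ r) (hb : ∀ v : E, |⟪A v, v⟫| ≤ r * ‖v‖ ^ 2)
    (v : E) : ‖A v‖ ≤ r * ‖v‖ := by
  by_cases hv : v = 0
  · simp [hv]
  by_cases hAv : A v = 0
  · rw [hAv, norm_zero]; positivity
  have hAv' : ‖A v‖ ≠ 0 := norm_ne_zero_iff.2 hAv
  set w : E := (‖v‖ / ‖A v‖) • A v with hw
  have hnw : ‖w‖ = ‖v‖ := by
    rw [hw, norm_smul, Real.norm_eq_abs, abs_of_nonneg (by positivity),
      div_mul_cancel₀ _ hAv']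
  have hinner : ⟪A v, w⟫ = ‖v‖ * ‖A v‖ := by
    rw [hw, real_inner_smul_right, real_inner_self_eq_norm_sq]
    field_simp [hAv']
  have hpol : ⟪A (v + w), v + w⟫ - ⟪A (v - w), v - w⟫ = 4 * ⟪A v, w⟫ := by
    have e1 : ⟪A (v + w), v + w⟫ = ⟪A v, v⟫ + ⟪A v, w⟫ + ⟪A w, v⟫ + ⟪A w, w⟫ := by
      simp [map_add, inner_add_left, inner_add_right]; ring
    have e2 : ⟪A (v - w), v - w⟫ = ⟪A v, v⟫ - ⟪A v, w⟫ - ⟪A w, v⟫ + ⟪A w, w⟫ := by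
      simp [map_sub, inner_sub_left, inner_sub_right]; ring
    rw [e1, e2]
    linarith [hsym v w]
  have hpar' : ‖v + w‖ ^ 2 + ‖v - w‖ ^ 2 = 4 * ‖v‖ ^ 2 := by
    have h := parallelogram_law_with_norm ℝ v w
    rw [hnw] at h
    linear_combination h
  have h1 := (abs_le.1 (hb (v + w))).2
  have h2 := (abs_le.1 (hb (v - w))).1
  have h5 : r * ‖v + w‖ ^ 2 + r * ‖v - w‖ ^ 2 = 4 * (r * ‖v‖ ^ 2) := by
    rw [← mul_add, hpar']; ring
  have hkey : 4 * (‖v‖ * ‖A v‖) ≤ 4 * (r * ‖v‖ ^ 2) := by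
    rw [← hinner, ← hpol]
    linarith
  have hv' : 0 < ‖v‖ := norm_pos_iff.2 hv
  nlinarith

lemma sym_norm_bound (A : E →L[ℝ] E) (hsym : ∀ v w : E, ⟪A v, w⟫ = ⟪A w, v⟫)
    {a b : ℝ} (hab : a ≤ b)
    (h1 : ∀ v : E, a * ‖v‖ ^ 2 ≤ ⟪A v, v⟫) (h2 : ∀ v : E, ⟪A v, v⟫ ≤ b * ‖v‖ ^ 2)
    (v : E) : ‖A v‖ ≤ max |a| |b| * ‖v‖ := by
  set c : ℝ := (a + b) / 2 with hc
  set r : ℝ := (b - a) / 2 with hrr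
  set B : E →L[ℝ] E := A - c • ContinuousLinearMap.id ℝ E with hB
  have hBapp : ∀ x : E, B x = A x - c • x := fun x => rfl
  have hBsym : ∀ x y : E, ⟪B x, y⟫ = ⟪B y, x⟫ := by
    intro x y
    simp only [hBapp, inner_sub_left, real_inner_smul_left]
    rw [hsym x y, real_inner_comm x y]
  have hBb : ∀ x : E, |⟪B x, x⟫| ≤ r * ‖x‖ ^ 2 := by
    intro x
    rw [abs_le]
    have e : ⟪B x, x⟫ = ⟪A x, x⟫ - c * ‖x‖ ^ 2 := by
      rw [hBapp, inner_sub_left, real_inner_smul_left, real_inner_self_eq_norm_sq]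
    constructor <;> [nlinarith [h1 x]; nlinarith [h2 x]]
  have hBv : ‖B v‖ ≤ r * ‖v‖ := sym_abs_bound B hBsym (by rw [hrr]; linarith) hBb v
  have h3 : ‖A v‖ ≤ ‖B v‖ + |c| * ‖v‖ := by
    have e : B v + c • v = A v := by rw [hBapp]; abel
    calc ‖A v‖ = ‖B v + c • v‖ := by rw [e]
      _ ≤ ‖B v‖ + ‖c • v‖ := norm_add_le _ _
      _ = ‖B v‖ + |c| * ‖v‖ := by rw [norm_smul, Real.norm_eq_abs]
  have h4 : r + |c| ≤ max |a| |b| := by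
    rcases le_or_gt 0 c with h | h
    · rw [abs_of_nonneg h]
      calc r + c = b := by rw [hrr, hc]; ring
        _ ≤ |b| := le_abs_self b
        _ ≤ max |a| |b| := le_max_right _ _
    · rw [abs_of_neg h]
      calc r + -c = -a := by rw [hrr, hc]; ring
        _ ≤ |a| := neg_abs_le a |> (fun h => by linarith [neg_le_abs a])
        _ ≤ max |a| |b| := le_max_left _ _
  nlinarith [norm_nonneg v, norm_nonneg (B v)]

noncomputable def dualIso (E : Type*) [NormedAddCommGroup E] [InnerProductSpace ℝ E]
    [CompleteSpace E] : StrongDual ℝ E ≃ₗᵢ[ℝ] E where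
  toLinearEquiv :=
  { toFun := (InnerProductSpace.toDual ℝ E).symm
    invFun := InnerProductSpace.toDual ℝ E
    map_add' := fun x y => map_add _ x y
    map_smul' := fun c x => (InnerProductSpace.toDual ℝ E).symm.map_smulₛₗ c x
    left_inv := fun y => (InnerProductSpace.toDual ℝ E).apply_symm_apply y
    right_inv := fun x => (InnerProductSpace.toDual ℝ E).symm_apply_apply x }
  norm_map' := fun x => (InnerProductSpace.toDual ℝ E).symm.norm_map x

lemma dualIso_apply {E : Type*} [NormedAddCommGroup E] [InnerProductSpace ℝ E] [CompleteSpace E]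
    (y : StrongDual ℝ E) : dualIso E y = (InnerProductSpace.toDual ℝ E).symm y := rfl

lemma step_contract {E : Type*} [NormedAddCommGroup E] [InnerProductSpace ℝ E]
    [CompleteSpace E]
    (f : E → ℝ) (hf : ContDiff ℝ 2 f) (ξ L α c : ℝ) (hα : 0 ≤ α) (hξL : ξ ≤ L)
    (hb : ∀ u v : E, ξ * ‖v‖ ^ 2 ≤ ⟪(fderiv ℝ (gradient f) u) v, v⟫ ∧
      ⟪(fderiv ℝ (gradient f) u) v, v⟫ ≤ L * ‖v‖ ^ 2)
    (u v : E) :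
    ‖(c • u - α • gradient f u) - (c • v - α • gradient f v)‖ ≤
      max |c - α * ξ| |c - α * L| * ‖u - v‖ := by
  have hdf : Differentiable ℝ (fderiv ℝ f) :=
    (hf.fderiv_right (m := 1) (by norm_num)).differentiable one_ne_zero
  have hgrad_eq : gradient f = ⇑(dualIso E) ∘ fderiv ℝ f := rfl
  have hg : Differentiable ℝ (gradient f) := by
    rw [hgrad_eq]
    exact (dualIso E).differentiable.comp hdf
  have hHx : ∀ x : E, fderiv ℝ (gradient f) x =
      ((dualIso E : StrongDual ℝ E →L[ℝ] E)).comp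
        (fderiv ℝ (fderiv ℝ f) x) := by
    intro x
    rw [hgrad_eq]
    exact (dualIso E).comp_fderiv
  have hsymH : ∀ (x v w : E),
      ⟪fderiv ℝ (gradient f) x v, w⟫ = ⟪fderiv ℝ (gradient f) x w, v⟫ := by
    intro x v w
    rw [hHx x]
    simp only [ContinuousLinearMap.coe_comp', Function.comp_apply,
      LinearIsometryEquiv.coe_coe'']
    rw [dualIso_apply, dualIso_apply,
      InnerProductSpace.toDual_symm_apply, InnerProductSpace.toDual_symm_apply]
    exact second_derivative_symmetric
      (fun y => (hf.differentiable two_ne_zero y).hasFDerivAt)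
      (hdf x).hasFDerivAt v w
  set φ : E → E := fun x => c • x - α • gradient f x with hφdef
  have hφ : ∀ x : E, HasFDerivAt φ
      (c • ContinuousLinearMap.id ℝ E - α • fderiv ℝ (gradient f) x) x :=
    fun x => ((hasFDerivAt_id x).const_smul c).sub ((hg x).hasFDerivAt.const_smul α)
  have hb' : ∀ x : E,
      ‖c • ContinuousLinearMap.id ℝ E - α • fderiv ℝ (gradient f) x‖ ≤
        max |c - α * ξ| |c - α * L| := by
    intro x
    apply ContinuousLinearMap.opNorm_le_bound _
      (le_trans (abs_nonneg _) (le_max_left _ _))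
    intro z
    have happ : ∀ y : E,
        (c • ContinuousLinearMap.id ℝ E - α • fderiv ℝ (gradient f) x) y
          = c • y - α • (fderiv ℝ (gradient f) x y) := fun y => rfl
    rw [max_comm]
    apply sym_norm_bound _ _ (sub_le_sub_left (mul_le_mul_of_nonneg_left hξL hα) c) _ _ z
    · intro p q
      simp only [happ, inner_sub_left, real_inner_smul_left]
      rw [hsymH x p q, real_inner_comm p q]
    · intro p
      have := (hb x p).2
      simp only [happ, inner_sub_left, real_inner_smul_left, real_inner_self_eq_norm_sq]
      nlinarith [mul_le_mul_of_nonneg_left (hb x p).2 hα]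
    · intro p
      simp only [happ, inner_sub_left, real_inner_smul_left, real_inner_self_eq_norm_sq]
      nlinarith [mul_le_mul_of_nonneg_left (hb x p).1 hα]
  exact Convex.norm_image_sub_le_of_norm_hasFDerivWithin_le
    (fun x _ => (hφ x).hasFDerivWithinAt) (fun x _ => hb' x) convex_univ
    (Set.mem_univ v) (Set.mem_univ u)

/-- one-step contraction for MGD: under the assumptions of the
main convergence theorem, each MGD step satisfies
`max_i ‖w_i^{t+1} - w_i*‖ ≤ (γ̄ + ασ) max_i ‖w_i^t - w_i*‖
   + 2ασ max_i ‖w_i*‖ + α max_i ‖∇f_i(w_i*)‖`. -/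
theorem stmt16 {d T : ℕ} (hT : 0 < T)
    (f : Fin T → EuclideanSpace ℝ (Fin d) → ℝ)
    (hC2 : ∀ i, ContDiff ℝ 2 (f i))
    (ξ L : Fin T → ℝ) (hξ : ∀ i, 0 < ξ i) (hξL : ∀ i, ξ i ≤ L i)
    (hbound : ∀ (i : Fin T) (u v : EuclideanSpace ℝ (Fin d)),
      ξ i * ‖v‖ ^ 2 ≤ ⟪(fderiv ℝ (gradient (f i)) u) v, v⟫ ∧
      ⟪(fderiv ℝ (gradient (f i)) u) v, v⟫ ≤ L i * ‖v‖ ^ 2)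
    (wstar : Fin T → EuclideanSpace ℝ (Fin d))
    (m : ℕ → Fin T → Fin T → ℝ)
    (hm : ∀ t i j, 0 ≤ m t i j) (hrow : ∀ t i, ∑ j, m t i j = 1)
    (σ α : ℝ) (hσ : 0 < σ) (hα0 : 0 < α)
    (hne : Finset.univ.Nonempty (α := Fin T))
    (w : ℕ → Fin T → EuclideanSpace ℝ (Fin d))
    (hiter : ∀ t i, w (t + 1) i =
      (1 - α * σ) • w t i + (α * σ) • (∑ j, m t i j • w t j) -
        α • gradient (f i) (w t i))
    (t : ℕ) :
    (Finset.univ.sup' hne fun i => ‖w (t + 1) i - wstar i‖) ≤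
      ((Finset.univ.sup' hne fun i =>
          max |1 - α * σ - α * ξ i| |1 - α * σ - α * L i|) + α * σ) *
        (Finset.univ.sup' hne fun i => ‖w t i - wstar i‖) +
      2 * α * σ * (Finset.univ.sup' hne fun i => ‖wstar i‖) +
      α * (Finset.univ.sup' hne fun i => ‖gradient (f i) (wstar i)‖) := by
  classical
  set W := Finset.univ.sup' hne fun i => ‖w t i - wstar i‖ with hWdef
  set Ms := Finset.univ.sup' hne fun i => ‖wstar i‖ with hMdef
  set G := Finset.univ.sup' hne fun i => ‖gradient (f i) (wstar i)‖ with hGdef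
  set Γ := Finset.univ.sup' hne
    (fun i => max |1 - α * σ - α * ξ i| |1 - α * σ - α * L i|) with hΓdef
  obtain ⟨i0, -⟩ := hne.exists_mem
  have hW0 : 0 ≤ W := le_trans (norm_nonneg _)
    (Finset.le_sup' (fun i => ‖w t i - wstar i‖) (Finset.mem_univ i0))
  have hM0 : 0 ≤ Ms := le_trans (norm_nonneg _)
    (Finset.le_sup' (fun i => ‖wstar i‖) (Finset.mem_univ i0))
  have hG0 : 0 ≤ G := le_trans (norm_nonneg _)
    (Finset.le_sup' (fun i => ‖gradient (f i) (wstar i)‖) (Finset.mem_univ i0))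
  have hΓ0 : 0 ≤ Γ := le_trans (le_trans (abs_nonneg _) (le_max_left _ _))
    (Finset.le_sup' (fun i => max |1 - α * σ - α * ξ i| |1 - α * σ - α * L i|)
      (Finset.mem_univ i0))
  apply Finset.sup'_le
  intro i _
  have hdec : w (t + 1) i - wstar i =
      (((1 - α * σ) • w t i - α • gradient (f i) (w t i)) -
        ((1 - α * σ) • wstar i - α • gradient (f i) (wstar i))) +
      ((α * σ) • ((∑ j, m t i j • w t j) - wstar i) -
        α • gradient (f i) (wstar i)) := by
    rw [hiter t i]
    module
  -- contraction bound for the first block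
  have h1 : ‖((1 - α * σ) • w t i - α • gradient (f i) (w t i)) -
      ((1 - α * σ) • wstar i - α • gradient (f i) (wstar i))‖ ≤ Γ * W := by
    have hc := step_contract (f i) (hC2 i) (ξ i) (L i) α (1 - α * σ) hα0.le (hξL i)
      (hbound i) (w t i) (wstar i)
    have e1 : (1 - α * σ) - α * ξ i = 1 - α * σ - α * ξ i := by ring
    have e2 : (1 - α * σ) - α * L i = 1 - α * σ - α * L i := by ring
    rw [e1, e2] at hc
    refine le_trans hc (mul_le_mul ?_ ?_ (norm_nonneg _) hΓ0)
    · exact Finset.le_sup'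
        (fun i => max |1 - α * σ - α * ξ i| |1 - α * σ - α * L i|) (Finset.mem_univ i)
    · exact Finset.le_sup' (fun i => ‖w t i - wstar i‖) (Finset.mem_univ i)
  -- mixing bound
  have h2 : ‖(∑ j, m t i j • w t j) - wstar i‖ ≤ W + 2 * Ms := by
    have e : (∑ j, m t i j • w t j) - wstar i =
        (∑ j, m t i j • (w t j - wstar j)) +
          ((∑ j, m t i j • wstar j) - wstar i) := by
      simp only [smul_sub, Finset.sum_sub_distrib]
      abel
    have hs1 : ‖∑ j, m t i j • (w t j - wstar j)‖ ≤ W := by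
      calc ‖∑ j, m t i j • (w t j - wstar j)‖
          ≤ ∑ j, ‖m t i j • (w t j - wstar j)‖ := norm_sum_le _ _
        _ = ∑ j, m t i j * ‖w t j - wstar j‖ := by
            refine Finset.sum_congr rfl fun j _ => ?_
            rw [norm_smul, Real.norm_eq_abs, abs_of_nonneg (hm t i j)]
        _ ≤ ∑ j, m t i j * W := Finset.sum_le_sum fun j _ =>
            mul_le_mul_of_nonneg_left
              (Finset.le_sup' (fun i => ‖w t i - wstar i‖) (Finset.mem_univ j)) (hm t i j)
        _ = W := by rw [← Finset.sum_mul, hrow t i, one_mul]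
    have hs2 : ‖∑ j, m t i j • wstar j‖ ≤ Ms := by
      calc ‖∑ j, m t i j • wstar j‖
          ≤ ∑ j, ‖m t i j • wstar j‖ := norm_sum_le _ _
        _ = ∑ j, m t i j * ‖wstar j‖ := by
            refine Finset.sum_congr rfl fun j _ => ?_
            rw [norm_smul, Real.norm_eq_abs, abs_of_nonneg (hm t i j)]
        _ ≤ ∑ j, m t i j * Ms := Finset.sum_le_sum fun j _ =>
            mul_le_mul_of_nonneg_left
              (Finset.le_sup' (fun i => ‖wstar i‖) (Finset.mem_univ j)) (hm t i j)
        _ = Ms := by rw [← Finset.sum_mul, hrow t i, one_mul]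
    have hs3 : ‖wstar i‖ ≤ Ms := Finset.le_sup' (fun i => ‖wstar i‖) (Finset.mem_univ i)
    calc ‖(∑ j, m t i j • w t j) - wstar i‖
        = ‖(∑ j, m t i j • (w t j - wstar j)) +
            ((∑ j, m t i j • wstar j) - wstar i)‖ := by rw [e]
      _ ≤ ‖∑ j, m t i j • (w t j - wstar j)‖ +
            ‖(∑ j, m t i j • wstar j) - wstar i‖ := norm_add_le _ _
      _ ≤ ‖∑ j, m t i j • (w t j - wstar j)‖ +
            (‖∑ j, m t i j • wstar j‖ + ‖wstar i‖) := by
          linarith [norm_sub_le (∑ j, m t i j • wstar j) (wstar i)]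
      _ ≤ W + 2 * Ms := by linarith
  have h3 : ‖gradient (f i) (wstar i)‖ ≤ G :=
    Finset.le_sup' (fun i => ‖gradient (f i) (wstar i)‖) (Finset.mem_univ i)
  have hασ : 0 ≤ α * σ := by positivity
  calc ‖w (t + 1) i - wstar i‖
      ≤ ‖((1 - α * σ) • w t i - α • gradient (f i) (w t i)) -
          ((1 - α * σ) • wstar i - α • gradient (f i) (wstar i))‖ +
        (‖(α * σ) • ((∑ j, m t i j • w t j) - wstar i)‖ +
          ‖α • gradient (f i) (wstar i)‖) := by
        rw [hdec]
        exact le_trans (norm_add_le _ _) (by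
          gcongr
          exact norm_sub_le _ _)
    _ ≤ Γ * W + ((α * σ) * (W + 2 * Ms) + α * G) := by
        have e1 : ‖(α * σ) • ((∑ j, m t i j • w t j) - wstar i)‖ =
            (α * σ) * ‖(∑ j, m t i j • w t j) - wstar i‖ := by
          rw [norm_smul, Real.norm_eq_abs, abs_of_nonneg hασ]
        have e2 : ‖α • gradient (f i) (wstar i)‖ = α * ‖gradient (f i) (wstar i)‖ := by
          rw [norm_smul, Real.norm_eq_abs, abs_of_nonneg hα0.le]
        rw [e1, e2]
        gcongr
    _ = (Γ + α * σ) * W + 2 * α * σ * Ms + α * G := by ring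
end
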